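/- Let F be the Fibonacci sequence (F 0 = 0, F 1 = 1) and let t : ℕ → ℕ → ℕ be defined by t n 0 = F(n+1), t n k = 0 if 3k > n, and t n k = t(n-1) k + t(n-2) k + t(n-3)(k-1) for n ≥ 3, 1 ≤ k (with out-of-range terms 0). Then for all n and k with 3k ≤ n: t n k = ∑ over tuples (i₀,...,i_k) of nonnegative integers with i₀+⋯+i_k = n-2k+1 of the product F(i₀)⋯F(i_k). -/

import Mathlib

open Finset

noncomputable def g (k m : ℕ) : ℕ :=
  ∑ f ∈ Finset.Nat.antidiagonalTuple (k + 1) m, ∏ i, Nat.fib (f i)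

lemma g_zero (m : ℕ) : g 0 m = Nat.fib m := by
  simp [g, Finset.Nat.antidiagonalTuple_one]

lemma g_succ (k m : ℕ) :
    g (k + 1) m = ∑ j ∈ Finset.range (m + 1), Nat.fib j * g k (m - j) := by
  rw [g, ← Finset.Nat.sum_antidiagonal_eq_sum_range_succ
    (fun a b => Nat.fib a * g k b) m]
  simp only [g, Finset.mul_sum]
  rw [Finset.sum_sigma']
  refine Finset.sum_bij'
    (fun f _ => (⟨(f 0, ∑ i, f (Fin.succ i)), Fin.tail f⟩ :
      (_ : ℕ × ℕ) × (Fin (k + 1) → ℕ)))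
    (fun a _ => Fin.cons a.1.1 a.2) ?_ ?_ ?_ ?_ ?_
  · intro f hf
    simp only [Finset.Nat.mem_antidiagonalTuple] at hf
    simp only [Finset.mem_sigma, Finset.HasAntidiagonal.mem_antidiagonal,
      Finset.Nat.mem_antidiagonalTuple]
    refine ⟨?_, rfl⟩
    rw [← hf]
    exact (Fin.sum_univ_succ f).symm
  · rintro ⟨⟨a, b⟩, f⟩ h
    simp only [Finset.mem_sigma, Finset.HasAntidiagonal.mem_antidiagonal,
      Finset.Nat.mem_antidiagonalTuple] at h ⊢
    rw [Fin.sum_cons, h.2, h.1]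
  · intro f hf
    exact Fin.cons_self_tail f
  · rintro ⟨⟨a, b⟩, f⟩ h
    simp only [Finset.mem_sigma, Finset.HasAntidiagonal.mem_antidiagonal,
      Finset.Nat.mem_antidiagonalTuple] at h
    simp only [Fin.cons_zero, Fin.tail_cons, Fin.cons_succ]
    congr 1
    exact Prod.ext rfl h.2
  · intro f hf
    rw [Fin.prod_univ_succ]
    rfl

lemma g_eq_zero (k m : ℕ) (h : m ≤ k) : g k m = 0 := by
  induction k generalizing m with
  | zero => interval_cases m; simp [g_zero]
  | succ k ih =>
    rw [g_succ]
    apply Finset.sum_eq_zero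
    intro j hj
    rcases Nat.eq_zero_or_pos j with rfl | hjp
    · simp
    · rw [ih (m - j) (by omega), Nat.mul_zero]

lemma g_rec (k m : ℕ) :
    g (k + 1) (m + 2) = g (k + 1) (m + 1) + g (k + 1) m + g k (m + 1) := by
  have e2 : g (k + 1) (m + 1)
      = ∑ j ∈ Finset.range (m + 1), Nat.fib (j + 1) * g k (m - j) := by
    rw [g_succ, Finset.sum_range_succ']
    simp
  have e3 : g (k + 1) (m + 2)
      = Nat.fib 1 * g k (m + 1)
        + ∑ j ∈ Finset.range (m + 1), Nat.fib (j + 2) * g k (m - j) := by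
    rw [g_succ, Finset.sum_range_succ', Finset.sum_range_succ']
    have : ∀ j, m + 2 - (j + 1 + 1) = m - j := by intro j; omega
    simp only [this, Nat.fib_zero, Nat.zero_mul, Nat.add_zero,
      Nat.add_succ_sub_one, show ∀ x : ℕ, x + 1 + 1 = x + 2 from fun _ => rfl,
      show m + 2 - 1 = m + 1 from rfl, show (2:ℕ) + m - 1 = 1 + m by omega]
    ring
  rw [e3, e2, g_succ k m]
  have : ∀ j ∈ Finset.range (m + 1),
      Nat.fib (j + 2) * g k (m - j)
        = Nat.fib j * g k (m - j) + Nat.fib (j + 1) * g k (m - j) := by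
    intro j _
    rw [Nat.fib_add_two, Nat.add_mul]
  rw [Finset.sum_congr rfl this, Finset.sum_add_distrib]
  simp [Nat.fib_one]
  ring

theorem stmt_12 (t : ℕ → ℕ → ℕ)
    (h0 : ∀ n, t n 0 = Nat.fib (n + 1))
    (hbig : ∀ n k, n < 3 * k → t n k = 0)
    (hrec : ∀ n k, t (n + 3) (k + 1) = t (n + 2) (k + 1) + t (n + 1) (k + 1) + t n k) :
    ∀ n k, 3 * k ≤ n →
      t n k = ∑ f ∈ Finset.Nat.antidiagonalTuple (k + 1) (n - 2 * k + 1),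
        ∏ i, Nat.fib (f i) := by
  have key : ∀ n k, 3 * k ≤ n → t n k = g k (n - 2 * k + 1) := by
    intro n
    induction n using Nat.strong_induction_on with
    | _ n ih =>
      intro k hk
      match k with
      | 0 => simpa [g_zero] using h0 n
      | k + 1 =>
        obtain ⟨n', rfl⟩ : ∃ n', n = n' + 3 := ⟨n - 3, by omega⟩
        have hk' : 3 * k ≤ n' := by omega
        rw [hrec n' k]
        have h1 : t n' k = g k (n' - 2 * k + 1) := ih n' (by omega) k hk'
        have h2 : t (n' + 2) (k + 1) = g (k + 1) (n' - 2 * k + 1) := by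
          rcases le_or_gt (3 * (k + 1)) (n' + 2) with h | h
          · have := ih (n' + 2) (by omega) (k + 1) h
            rwa [show n' + 2 - 2 * (k + 1) + 1 = n' - 2 * k + 1 by omega] at this
          · rw [hbig _ _ h, g_eq_zero _ _ (by omega)]
        have h3 : t (n' + 1) (k + 1) = g (k + 1) (n' - 2 * k) := by
          rcases le_or_gt (3 * (k + 1)) (n' + 1) with h | h
          · have := ih (n' + 1) (by omega) (k + 1) h
            rwa [show n' + 1 - 2 * (k + 1) + 1 = n' - 2 * k by omega] at this
          · rw [hbig _ _ h, g_eq_zero _ _ (by omega)]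
        rw [h1, h2, h3]
        obtain ⟨a, ha⟩ : ∃ a, n' - 2 * k = a := ⟨_, rfl⟩
        rw [ha, show n' + 3 - 2 * (k + 1) + 1 = a + 2 by omega]
        exact (g_rec k a).symm
  intro n k hk
  rw [key n k hk]
  rfl
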